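/- Let G be a group and φ : G → SL₃(ℤ) a group homomorphism. Let α, β, γ ∈ ℝ be linearly independent over ℤ (i.e., if a, b, c ∈ ℤ and aα + bβ + cγ = 0 then a = b = c = 0), and let P = {w ∈ ℤ³ : ⟨(α,β,γ), w⟩ > 0}, which is a positive cone of ℤ³. Suppose there exist nonzero integers n, m and elements g, h ∈ G such that φ(g) = I₃ + n·E₁₃ and φ(h) = I₃ + m·E₂₃. Then for every finite subset F ⊆ P there exists k in the subgroup generated by g and h such that φ(k)·P ≠ P and F ⊆ φ(k)·P. -/

import Mathlib

/-- The Euclidean inner product of a real vector with an integer vector. -/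
def ipZ {n : ℕ} (v : Fin n → ℝ) (w : Fin n → ℤ) : ℝ := ∑ i, v i * (w i : ℝ)

/-- The image `A · P` of a subset `P ⊆ ℤ³` under a matrix `A`. -/
def mulVecSet (A : Matrix (Fin 3) (Fin 3) ℤ) (P : Set (Fin 3 → ℤ)) :
    Set (Fin 3 → ℤ) :=
  (fun w => A.mulVec w) '' P

def Amat (p q : ℤ) : Matrix (Fin 3) (Fin 3) ℤ := !![1,0,p;0,1,q;0,0,1]

lemma Amat_std (p q : ℤ) :
    (1 : Matrix (Fin 3) (Fin 3) ℤ) + p • Matrix.single 0 2 1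
      + q • Matrix.single 1 2 1 = Amat p q := by
  ext i j
  fin_cases i <;> fin_cases j <;>
    simp [Amat, Matrix.single, Matrix.one_apply, Matrix.vecHead, Matrix.vecTail]

lemma Amat_mul (p q p' q' : ℤ) : Amat p q * Amat p' q' = Amat (p + p') (q + q') := by
  ext i j
  fin_cases i <;> fin_cases j <;>
    simp [Amat, Matrix.mul_apply, Fin.sum_univ_three, add_comm, Matrix.vecHead, Matrix.vecTail]

lemma Amat_zero : Amat 0 0 = 1 := by
  ext i j
  fin_cases i <;> fin_cases j <;>
    simp [Amat, Matrix.one_apply, Matrix.vecHead, Matrix.vecTail]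

lemma Amat_mulVec (p q : ℤ) (w : Fin 3 → ℤ) :
    (Amat p q).mulVec w = ![w 0 + p * w 2, w 1 + q * w 2, w 2] := by
  funext i
  fin_cases i <;>
    simp [Amat, Matrix.mulVec, dotProduct, Fin.sum_univ_three,
      Matrix.vecHead, Matrix.vecTail]

lemma SL_pow_Amat (X : Matrix.SpecialLinearGroup (Fin 3) ℤ) (p q : ℤ)
    (hX : (X : Matrix (Fin 3) (Fin 3) ℤ) = Amat p q) (a : ℤ) :
    ((X ^ a : Matrix.SpecialLinearGroup (Fin 3) ℤ) : Matrix (Fin 3) (Fin 3) ℤ)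
      = Amat (a * p) (a * q) := by
  have hnat : ∀ c : ℕ, ((X ^ c : Matrix.SpecialLinearGroup (Fin 3) ℤ)
      : Matrix (Fin 3) (Fin 3) ℤ) = Amat (c * p) (c * q) := by
    intro c
    induction c with
    | zero => simpa using Amat_zero.symm
    | succ c ih =>
        rw [pow_succ, Matrix.SpecialLinearGroup.coe_mul, ih, hX, Amat_mul]
        congr 1 <;> push_cast <;> ring
  rcases a.eq_nat_or_neg with ⟨c, rfl | rfl⟩
  · rw [zpow_natCast, hnat c]
  · have h1 : ((X ^ (-(c:ℤ)) : Matrix.SpecialLinearGroup (Fin 3) ℤ)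
        : Matrix (Fin 3) (Fin 3) ℤ) * Amat (c * p) (c * q) = 1 := by
      rw [← hnat c, ← zpow_natCast X c, ← Matrix.SpecialLinearGroup.coe_mul,
        ← zpow_add, neg_add_cancel, zpow_zero, Matrix.SpecialLinearGroup.coe_one]
    have h2 : ((X ^ (-(c:ℤ)) : Matrix.SpecialLinearGroup (Fin 3) ℤ)
        : Matrix (Fin 3) (Fin 3) ℤ)
        = ((X ^ (-(c:ℤ)) : Matrix.SpecialLinearGroup (Fin 3) ℤ)
          : Matrix (Fin 3) (Fin 3) ℤ) * (Amat (c * p) (c * q) * Amat (-(c * p)) (-(c * q))) := by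
      rw [Amat_mul]; simp [Amat_zero]
    rw [h2, ← mul_assoc, h1, one_mul]
    congr 1 <;> push_cast <;> ring

lemma mem_mulVecSet_Amat (α β γ : ℝ) (p q : ℤ) (u : Fin 3 → ℤ) :
    u ∈ mulVecSet (Amat p q) {w : Fin 3 → ℤ | 0 < ipZ ![α, β, γ] w} ↔
    0 < ipZ ![α, β, γ] u - ((p : ℝ) * α + (q : ℝ) * β) * (u 2 : ℝ) := by
  constructor
  · rintro ⟨w, hw, rfl⟩
    have h1 : ipZ ![α, β, γ] ((Amat p q).mulVec w)
        - ((p : ℝ) * α + (q : ℝ) * β) * (((Amat p q).mulVec w) 2 : ℝ)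
        = ipZ ![α, β, γ] w := by
      simp [ipZ, Amat_mulVec, Fin.sum_univ_three]; push_cast; ring
    rw [h1]; exact hw
  · intro hu
    refine ⟨![u 0 - p * u 2, u 1 - q * u 2, u 2], ?_, ?_⟩
    · have h1 : ipZ ![α, β, γ] ![u 0 - p * u 2, u 1 - q * u 2, u 2]
          = ipZ ![α, β, γ] u - ((p : ℝ) * α + (q : ℝ) * β) * (u 2 : ℝ) := by
        simp [ipZ, Fin.sum_univ_three]; push_cast; ring
      simpa [Set.mem_setOf_eq, h1] using hu
    · show (Amat p q).mulVec ![u 0 - p * u 2, u 1 - q * u 2, u 2] = u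
      rw [Amat_mulVec]
      funext i
      fin_cases i <;> simp <;> ring

lemma dense_aux (α β γ : ℝ)
    (hind : ∀ a b c : ℤ, (a : ℝ) * α + (b : ℝ) * β + (c : ℝ) * γ = 0 →
      a = 0 ∧ b = 0 ∧ c = 0)
    (x y : ℤ) (hx : x ≠ 0) (hy : y ≠ 0) :
    Dense ((AddSubgroup.closure ({(x:ℝ) * α, (y:ℝ) * β} : Set ℝ) : Set ℝ)) := by
  have hβ : β ≠ 0 := by
    intro h0
    have := (hind 0 1 0 (by simp [h0])).2.1
    exact one_ne_zero this
  set S := AddSubgroup.closure ({(x:ℝ) * α, (y:ℝ) * β} : Set ℝ)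
  rcases S.dense_or_cyclic with hd | ⟨z, hz⟩
  · exact hd
  · exfalso
    have h1 : (x:ℝ) * α ∈ S := AddSubgroup.subset_closure (by simp)
    have h2 : (y:ℝ) * β ∈ S := AddSubgroup.subset_closure (by simp)
    rw [hz, AddSubgroup.mem_closure_singleton] at h1 h2
    obtain ⟨p, hp⟩ := h1
    obtain ⟨q, hq⟩ := h2
    have hp' : (p : ℝ) * z = (x:ℝ) * α := by rw [← hp]; simp [zsmul_eq_mul]
    have hq' : (q : ℝ) * z = (y:ℝ) * β := by rw [← hq]; simp [zsmul_eq_mul]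
    have hzero : ((q * x : ℤ) : ℝ) * α + ((-(p * y) : ℤ) : ℝ) * β + ((0:ℤ) : ℝ) * γ = 0 := by
      push_cast
      linear_combination (p : ℝ) * hq' - (q : ℝ) * hp'
    obtain ⟨hq0, -, -⟩ := hind _ _ _ hzero
    have hq0' : q = 0 := by
      rcases mul_eq_zero.1 hq0 with h' | h'
      · exact h'
      · exact absurd h' hx
    rw [hq0'] at hq
    simp only [zero_zsmul] at hq
    rcases mul_eq_zero.1 hq.symm with h' | h'
    · exact hy (by exact_mod_cast h')
    · exact hβ h'

/-- If `φ : G → SL₃(ℤ)` hits the elementary matrices `I + n E₁₃` and `I + m E₂₃`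
(`n, m ≠ 0`) and `P` is the positive cone of `ℤ³` defined by a vector `(α, β, γ)` whose
coordinates are linearly independent over `ℤ`, then every neighborhood of `P` contains a
translate `φ(k) · P ≠ P` with `k` in the subgroup generated by `g` and `h`. -/
theorem cone_limit_of_elementary_matrices
    {G : Type*} [Group G] (φ : G →* Matrix.SpecialLinearGroup (Fin 3) ℤ)
    (α β γ : ℝ)
    (hind : ∀ a b c : ℤ, (a : ℝ) * α + (b : ℝ) * β + (c : ℝ) * γ = 0 →
      a = 0 ∧ b = 0 ∧ c = 0)
    (P : Set (Fin 3 → ℤ)) (hPdef : P = {w : Fin 3 → ℤ | 0 < ipZ ![α, β, γ] w})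
    (n m : ℤ) (hn : n ≠ 0) (hm : m ≠ 0) (g h : G)
    (hg : (φ g : Matrix (Fin 3) (Fin 3) ℤ) = 1 + n • Matrix.single 0 2 1)
    (hh : (φ h : Matrix (Fin 3) (Fin 3) ℤ) = 1 + m • Matrix.single 1 2 1) :
    ∀ F : Finset (Fin 3 → ℤ), ↑F ⊆ P →
      ∃ k ∈ Subgroup.closure ({g, h} : Set G),
        mulVecSet (φ k : Matrix (Fin 3) (Fin 3) ℤ) P ≠ P ∧
        ↑F ⊆ mulVecSet (φ k : Matrix (Fin 3) (Fin 3) ℤ) P := by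
  intro F hF
  have hgA : (φ g : Matrix (Fin 3) (Fin 3) ℤ) = Amat n 0 := by
    rw [hg, ← Amat_std n 0]; simp
  have hhA : (φ h : Matrix (Fin 3) (Fin 3) ℤ) = Amat 0 m := by
    rw [hh, ← Amat_std 0 m]; simp
  have hdense := dense_aux α β γ hind n m hn hm
  have hdense1 := dense_aux α β γ hind 1 1 one_ne_zero one_ne_zero
  set v : Fin 3 → ℝ := ![α, β, γ] with hv
  set N : ℕ := F.sup fun w => (w 2).natAbs with hNdef
  have hN : ∀ w ∈ F, |(w 2 : ℝ)| ≤ (N : ℝ) := by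
    intro w hw
    have h1 : (w 2).natAbs ≤ N := Finset.le_sup (f := fun w => (w 2).natAbs) hw
    calc |(w 2 : ℝ)| = ((w 2).natAbs : ℝ) := by rw [Nat.cast_natAbs, Int.cast_abs]
      _ ≤ (N : ℝ) := by exact_mod_cast h1
  obtain ⟨t, htS, ht0, htkey⟩ : ∃ t, t ∈ AddSubgroup.closure ({(n:ℝ) * α, (m:ℝ) * β} : Set ℝ)
      ∧ 0 < t ∧ ∀ w ∈ F, t * (w 2 : ℝ) < ipZ v w := by
    rcases F.eq_empty_or_nonempty with rfl | hFne
    · obtain ⟨t, htS, ht⟩ := hdense.exists_between (zero_lt_one (α := ℝ))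
      exact ⟨t, htS, ht.1, by simp⟩
    · set ε := F.inf' hFne fun w => ipZ v w with hεdef
      have hε : 0 < ε := by
        rw [hεdef, Finset.lt_inf'_iff]
        intro w hw
        have := hF hw
        rw [hPdef] at this
        exact this
      have hδ : 0 < ε / ((N : ℝ) + 1) := by positivity
      obtain ⟨t, htS, ht0, htδ⟩ := hdense.exists_between hδ
      refine ⟨t, htS, ht0, fun w hw => ?_⟩
      have hip : ε ≤ ipZ v w := Finset.inf'_le _ hw
      have h1 : t * (w 2 : ℝ) ≤ t * |(w 2 : ℝ)| :=
        mul_le_mul_of_nonneg_left (le_abs_self _) ht0.le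
      have h2 : t * |(w 2 : ℝ)| ≤ t * (N : ℝ) :=
        mul_le_mul_of_nonneg_left (hN w hw) ht0.le
      have h3 : t * ((N : ℝ) + 1) < (ε / ((N : ℝ) + 1)) * ((N : ℝ) + 1) := by
        apply mul_lt_mul_of_pos_right htδ; positivity
      have h4 : (ε / ((N : ℝ) + 1)) * ((N : ℝ) + 1) = ε := by field_simp
      nlinarith
  rw [AddSubgroup.mem_closure_pair] at htS
  obtain ⟨a, b, hab⟩ := htS
  have hφk : (φ (g ^ a * h ^ b) : Matrix (Fin 3) (Fin 3) ℤ) = Amat (a * n) (b * m) := by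
    rw [map_mul, map_zpow, map_zpow, Matrix.SpecialLinearGroup.coe_mul,
      SL_pow_Amat (φ g) n 0 hgA a, SL_pow_Amat (φ h) 0 m hhA b, Amat_mul]
    congr 1 <;> ring
  have htc : ((a * n : ℤ) : ℝ) * α + ((b * m : ℤ) : ℝ) * β = t := by
    rw [← hab]; push_cast [zsmul_eq_mul]; ring
  refine ⟨g ^ a * h ^ b, ?_, ?_, ?_⟩
  · have hgmem : g ∈ Subgroup.closure ({g, h} : Set G) :=
      Subgroup.subset_closure (by simp)
    have hhmem : h ∈ Subgroup.closure ({g, h} : Set G) :=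
      Subgroup.subset_closure (by simp)
    exact mul_mem (zpow_mem hgmem a) (zpow_mem hhmem b)
  · -- mulVecSet ≠ P
    obtain ⟨s, hsS, hs⟩ := hdense1.exists_between (show -γ < t - γ by linarith)
    rw [SetLike.mem_coe, AddSubgroup.mem_closure_pair] at hsS
    obtain ⟨a', b', ha'b'⟩ := hsS
    set u0 : Fin 3 → ℤ := ![a', b', 1] with hu0
    have hipu0 : ipZ v u0 = s + γ := by
      rw [← ha'b']
      simp [ipZ, hv, Fin.sum_univ_three, hu0, zsmul_eq_mul]; ring
    intro heq
    have hu0P : u0 ∈ P := by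
      rw [hPdef]
      simp only [Set.mem_setOf_eq, ← hv, hipu0]
      linarith [hs.1]
    rw [← heq, hφk, hPdef] at hu0P
    rw [show {w : Fin 3 → ℤ | 0 < ipZ v w} = {w : Fin 3 → ℤ | 0 < ipZ ![α, β, γ] w} from rfl,
      mem_mulVecSet_Amat] at hu0P
    have hu02 : ((u0 2 : ℤ) : ℝ) = 1 := by simp [hu0]
    rw [show ipZ ![α, β, γ] u0 = ipZ v u0 from rfl, hipu0, hu02, mul_one, htc] at hu0P
    linarith [hs.2]
  · -- F ⊆ mulVecSet
    intro w hw
    rw [hφk, hPdef,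
      show {w : Fin 3 → ℤ | 0 < ipZ v w} = {w : Fin 3 → ℤ | 0 < ipZ ![α, β, γ] w} from rfl,
      mem_mulVecSet_Amat, htc]
    have := htkey w hw
    simp only [← hv]
    linarith
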